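/- Let τ be a rearrangement of dyadic intervals satisfying Property P with constant M: for each dyadic J, the collection {τ(I) : τ(I) ⊆ J} decomposes as a disjoint union ⋃ τ(L_i) ∪ ⋃ E_i where ⋃E_i satisfies the M-Carleson condition, |τ(I)|/|I| ≤ M(|τ(L_i)*| + |E_i*|)/|L_i*| for I ∈ L_i, and Σ_i |τ(L_i)*| ≤ M|J|. Then the operator T h_I = h_{τ(I)} is bounded on dyadic BMO with ‖Tx‖² ≤ 6M² ‖x‖². -/

import Mathlib

open MeasureTheory

/-- A dyadic interval `[k/2^n, (k+1)/2^n)` of `[0,1)`. -/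
structure DI where
  n : ℕ
  k : ℕ
  hk : k < 2 ^ n

namespace DI

/-- The underlying set of a dyadic interval. -/
def carrier (I : DI) : Set ℝ := Set.Ico ((I.k : ℝ) / 2 ^ I.n) ((I.k + 1 : ℝ) / 2 ^ I.n)

/-- The length `|I| = 2^{-n}` of a dyadic interval. -/
noncomputable def len (I : DI) : ENNReal := ENNReal.ofReal ((2 : ℝ)⁻¹ ^ I.n)

end DI

/-- The Carleson sum `∑_{I ∈ L, I ⊆ J} |I|`. -/
noncomputable def carlesonSum (L : Set DI) (J : DI) : ENNReal :=
  ∑' I : {I : DI // I ∈ L ∧ I.carrier ⊆ J.carrier}, I.1.len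

/-- `L` satisfies the `M`-Carleson condition. -/
def CarlesonLE (L : Set DI) (M : ENNReal) : Prop :=
  ∀ J : DI, carlesonSum L J ≤ M * J.len

/-- The Carleson constant `⟦L⟧ = sup_J (1/|J|) ∑_{I ∈ L, I ⊆ J} |I|`. -/
noncomputable def carlesonConst (L : Set DI) : ENNReal :=
  ⨆ J : DI, carlesonSum L J / J.len

/-- The square of the dyadic BMO norm of `x = ∑ x_I h_I`,
`‖x‖² = sup_J (1/|J|) ∑_{I ⊆ J} x_I² |I|`, in terms of the Haar coefficients. -/
noncomputable def bmoSq (x : DI → ℝ) : ENNReal :=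
  ⨆ J : DI, (∑' I : {I : DI // I.carrier ⊆ J.carrier},
      ENNReal.ofReal ((x I.1) ^ 2) * I.1.len) / J.len

/-- `|L*|`: the Lebesgue measure of the set covered by the collection `L`. -/
noncomputable def covMeas (L : Set DI) : ENNReal := volume (⋃ I ∈ L, I.carrier)

/-- `y` is the coefficient function of `Tx` where `T h_I = h_{τ(I)}` and `x` has
coefficients `x_I`. -/
def HaarCompat (τ : DI → DI) (x y : DI → ℝ) : Prop :=
  (∀ I, y (τ I) = x I) ∧ ∀ J, J ∉ Set.range τ → y J = 0

/-- The maximal elements of a collection of dyadic intervals, under inclusion. -/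
def maxSet (S : Set DI) : Set DI :=
  {I | I ∈ S ∧ ∀ K ∈ S, I.carrier ⊆ K.carrier → I = K}

open scoped ENNReal

namespace DI

instance : Countable DI := by
  have : Function.Injective (fun I : DI => (I.n, I.k)) := by
    rintro ⟨n, k, h⟩ ⟨n', k', h'⟩ he
    simp only [Prod.mk.injEq] at he
    obtain ⟨rfl, rfl⟩ := he; rfl
  exact this.countable

lemma lt_carrier (I : DI) : (I.k : ℝ) / 2 ^ I.n < (I.k + 1 : ℝ) / 2 ^ I.n := by
  rw [div_lt_div_iff_of_pos_right (by positivity)]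
  linarith

lemma carrier_nonempty (I : DI) : I.carrier.Nonempty :=
  ⟨_, Set.left_mem_Ico.2 (lt_carrier I)⟩

lemma sub_eq (I : DI) : ((I.k:ℝ)+1)/2^I.n - I.k/2^I.n = (2:ℝ)⁻¹^I.n := by
  rw [inv_pow]
  field_simp
  ring

lemma volume_carrier (I : DI) : volume I.carrier = I.len := by
  rw [carrier, Real.volume_Ico, len]
  congr 1
  push_cast
  exact sub_eq I

lemma len_ne_zero (I : DI) : I.len ≠ 0 := by
  simp only [len, ne_eq, ENNReal.ofReal_eq_zero, not_le]
  positivity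

lemma len_ne_top (I : DI) : I.len ≠ ⊤ := ENNReal.ofReal_ne_top

lemma measurable_carrier (I : DI) : MeasurableSet I.carrier := measurableSet_Ico

lemma carrier_injective : Function.Injective carrier := by
  intro I K h
  rw [carrier, carrier, Set.Ico_eq_Ico_iff (Or.inl (lt_carrier I))] at h
  obtain ⟨h1, h2⟩ := h
  have hd : ((I.k:ℝ)+1)/2^I.n - I.k/2^I.n = ((K.k:ℝ)+1)/2^K.n - K.k/2^K.n := by
    push_cast at h1 h2 ⊢; rw [h1, h2]
  rw [sub_eq, sub_eq] at hd
  have hn : I.n = K.n := by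
    have := pow_right_injective₀ (M₀ := ℝ) ?_ ?_ hd
    · exact this
    · norm_num
    · norm_num
  have hk : I.k = K.k := by
    have : (I.k:ℝ) = K.k := by
      rw [hn] at h1
      field_simp at h1
      exact_mod_cast h1
    exact_mod_cast this
  cases I; cases K; simp_all
end DI

namespace DI

lemma subset_of_inter {I K : DI} (hn : I.n ≤ K.n)
    (h : (I.carrier ∩ K.carrier).Nonempty) : K.carrier ⊆ I.carrier := by
  obtain ⟨x, ⟨hx1, hx2⟩, ⟨hx3, hx4⟩⟩ := h
  set n := I.n; set m := K.n
  set d := m - n with hd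
  have hm : m = n + d := by omega
  have h2 : (2:ℝ) ^ m = 2 ^ n * 2 ^ d := by rw [hm, pow_add]
  have hpn : (0:ℝ) < 2 ^ n := by positivity
  have hpd : (0:ℝ) < 2 ^ d := by positivity
  have hpm : (0:ℝ) < 2 ^ m := by positivity
  -- claim 1 : I.k * 2^d ≤ K.k
  have c1 : (I.k : ℝ) * 2 ^ d ≤ K.k := by
    by_contra hc
    push_neg at hc
    have : (K.k : ℝ) + 1 ≤ I.k * 2 ^ d := by
      have : (K.k : ℕ) + 1 ≤ I.k * 2 ^ d := by
        have := hc
        push_cast at this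
        exact_mod_cast Nat.lt_iff_add_one_le.mp (by exact_mod_cast this)
      exact_mod_cast this
    have : x < (I.k : ℝ) / 2 ^ n := by
      calc x < ((K.k:ℝ) + 1) / 2 ^ m := hx4
        _ ≤ (I.k * 2 ^ d) / 2 ^ m := by gcongr
        _ = (I.k : ℝ) / 2 ^ n := by rw [h2]; field_simp
    linarith
  -- claim 2 : K.k + 1 ≤ (I.k+1) * 2^d
  have c2 : (K.k : ℝ) + 1 ≤ ((I.k:ℝ) + 1) * 2 ^ d := by
    by_contra hc
    push_neg at hc
    have : ((I.k:ℝ) + 1) * 2 ^ d ≤ K.k := by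
      have h' : ((I.k:ℕ) + 1) * 2 ^ d ≤ K.k := by
        have h3 : (((I.k:ℕ) + 1) * 2 ^ d : ℝ) < (K.k:ℕ) + 1 := by push_cast; linarith
        have h4 : ((I.k:ℕ) + 1) * 2 ^ d < K.k + 1 := by exact_mod_cast h3
        omega
      exact_mod_cast h'
    have : ((I.k:ℝ) + 1) / 2 ^ n ≤ x := by
      calc ((I.k:ℝ) + 1) / 2 ^ n = ((I.k+1) * 2 ^ d) / 2 ^ m := by rw [h2]; field_simp
        _ ≤ (K.k : ℝ) / 2 ^ m := by gcongr
        _ ≤ x := hx3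
    linarith
  intro y ⟨hy1, hy2⟩
  constructor
  · calc (I.k : ℝ) / 2 ^ n = (I.k * 2 ^ d) / 2 ^ m := by rw [h2]; field_simp
      _ ≤ (K.k : ℝ) / 2 ^ m := by gcongr
      _ ≤ y := hy1
  · calc y < ((K.k:ℝ) + 1) / 2 ^ m := hy2
      _ ≤ (((I.k:ℝ)+1) * 2 ^ d) / 2 ^ m := by gcongr
      _ = ((I.k:ℝ) + 1) / 2 ^ n := by rw [h2]; field_simp

lemma n_le_of_subset {I K : DI} (h : I.carrier ⊆ K.carrier) : K.n ≤ I.n := by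
  by_contra hc
  push_neg at hc
  have h2 : (I.carrier ∩ K.carrier).Nonempty := by
    obtain ⟨z, hz⟩ := carrier_nonempty I
    exact ⟨z, hz, h hz⟩
  have hsub2 : K.carrier ⊆ I.carrier := subset_of_inter hc.le h2
  have heq : I = K := carrier_injective (le_antisymm h hsub2)
  simp [heq] at hc

end DI
namespace DI

lemma eq_of_subset_of_n_le {I K : DI} (h : I.carrier ⊆ K.carrier) (hn : I.n ≤ K.n) : I = K := by
  have h2 : (I.carrier ∩ K.carrier).Nonempty := by
    obtain ⟨z, hz⟩ := carrier_nonempty I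
    exact ⟨z, hz, h hz⟩
  exact carrier_injective (le_antisymm h (subset_of_inter hn h2))

lemma trichotomy {I K : DI} (h : (I.carrier ∩ K.carrier).Nonempty) :
    I.carrier ⊆ K.carrier ∨ K.carrier ⊆ I.carrier := by
  rcases le_total I.n K.n with hn | hn
  · exact Or.inr (subset_of_inter hn h)
  · exact Or.inl (subset_of_inter hn (by rwa [Set.inter_comm] at h))

lemma ancestors_finite (I : DI) : {K : DI | I.carrier ⊆ K.carrier}.Finite := by
  apply Set.Finite.of_finite_image (f := fun K => K.n)
  · apply (Set.finite_Iic I.n).subset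
    rintro n ⟨K, hK, rfl⟩
    exact n_le_of_subset hK
  · rintro K hK K' hK' (he : K.n = K'.n)
    obtain ⟨z, hz⟩ := carrier_nonempty I
    rcases trichotomy (I := K) (K := K') ⟨z, hK hz, hK' hz⟩ with h | h
    · exact eq_of_subset_of_n_le h he.le
    · exact (eq_of_subset_of_n_le h he.ge).symm

lemma exists_maximal {S : Set DI} {I : DI} (hI : I ∈ S) :
    ∃ J, J ∈ maxSet S ∧ I.carrier ⊆ J.carrier := by
  set A := {K | K ∈ S ∧ I.carrier ⊆ K.carrier} with hA
  have hfin : A.Finite := (ancestors_finite I).subset (fun K hK => hK.2)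
  obtain ⟨J, hJA, hmin⟩ := Set.Finite.exists_minimalFor (fun K => K.n) A hfin ⟨I, hI, subset_rfl⟩
  refine ⟨J, ⟨hJA.1, ?_⟩, hJA.2⟩
  intro K hK hJK
  have hKA : K ∈ A := ⟨hK, hJA.2.trans hJK⟩
  have hn : K.n ≤ J.n := n_le_of_subset hJK
  exact eq_of_subset_of_n_le hJK (hmin hKA hn)

lemma maxSet_pairwiseDisjoint (S : Set DI) : (maxSet S).PairwiseDisjoint carrier := by
  intro J hJ J' hJ' hne
  rw [Function.onFun, Set.disjoint_iff_inter_eq_empty]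
  by_contra hc
  rcases trichotomy (Set.nonempty_iff_ne_empty.2 hc) with h | h
  · exact hne (hJ.2 J' hJ'.1 h)
  · exact hne ((hJ'.2 J hJ.1 h).symm)

lemma covMeas_eq_tsum_maxSet (S : Set DI) : covMeas S = ∑' J : maxSet S, J.1.len := by
  have hU : ⋃ I ∈ S, I.carrier = ⋃ J ∈ maxSet S, J.carrier := by
    apply Set.Subset.antisymm
    · refine Set.iUnion₂_subset fun I hI => ?_
      obtain ⟨J, hJ, hIJ⟩ := exists_maximal hI
      exact hIJ.trans (Set.subset_biUnion_of_mem hJ)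
    · exact Set.iUnion₂_mono' fun J hJ => ⟨J, hJ.1, subset_rfl⟩
  rw [covMeas, hU,
    measure_biUnion (Set.to_countable _) (maxSet_pairwiseDisjoint S)
      (fun J _ => measurable_carrier J)]
  simp only [volume_carrier]

lemma sum_subsets_le (x : DI → ℝ) (J : DI) :
    (∑' I : {I : DI // I.carrier ⊆ J.carrier}, ENNReal.ofReal ((x I.1) ^ 2) * I.1.len)
      ≤ bmoSq x * J.len := by
  have h := le_iSup (fun J : DI => (∑' I : {I : DI // I.carrier ⊆ J.carrier},
      ENNReal.ofReal ((x I.1) ^ 2) * I.1.len) / J.len) J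
  rw [ENNReal.div_le_iff_le_mul (Or.inl (len_ne_zero J)) (Or.inl (len_ne_top J))] at h
  exact h

lemma sq_le_bmoSq (x : DI → ℝ) (I : DI) : ENNReal.ofReal ((x I) ^ 2) ≤ bmoSq x := by
  have h1 : ENNReal.ofReal ((x I) ^ 2) * I.len
      ≤ ∑' I' : {I' : DI // I'.carrier ⊆ I.carrier}, ENNReal.ofReal ((x I'.1) ^ 2) * I'.1.len :=
    ENNReal.le_tsum (⟨I, subset_rfl⟩ : {I' : DI // I'.carrier ⊆ I.carrier})
  have h2 := h1.trans (sum_subsets_le x I)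
  exact (ENNReal.mul_le_mul_iff_left (len_ne_zero I) (len_ne_top I)).mp h2

lemma tsum_le_bmoSq_covMeas (x : DI → ℝ) (S : Set DI) :
    (∑' I : S, ENNReal.ofReal ((x I.1) ^ 2) * I.1.len) ≤ bmoSq x * covMeas S := by
  classical
  set f : DI → ℝ≥0∞ := fun I => ENNReal.ofReal ((x I) ^ 2) * I.len with hf
  choose u hu1 hu2 using fun I : S => exists_maximal I.2
  have key : (∑' I : S, f I.1) = ∑' J : DI, ∑' I : u ⁻¹' {J}, f I.1.1 :=
    (ENNReal.tsum_fiberwise (fun I : S => f I.1) u).symm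
  have inner_le : ∀ J : DI, (∑' I : u ⁻¹' {J}, f I.1.1)
      ≤ Set.indicator (maxSet S) (fun J => bmoSq x * J.len) J := by
    intro J
    by_cases hJ : ∃ I : S, u I = J
    · obtain ⟨I0, hI0⟩ := hJ
      have hJm : J ∈ maxSet S := hI0 ▸ hu1 I0
      rw [Set.indicator_of_mem hJm]
      refine le_trans ?_ (sum_subsets_le x J)
      refine Summable.tsum_le_tsum_of_inj
        (fun I : u ⁻¹' {J} => (⟨I.1.1, by
          have h2 := hu2 I.1
          have h3 : u I.1 = J := I.2
          rwa [h3] at h2⟩ : {I : DI // I.carrier ⊆ J.carrier}))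
        ?_ (fun _ _ => zero_le) (fun _ => le_rfl) ENNReal.summable ENNReal.summable
      intro a b hab
      simpa [Subtype.ext_iff] using hab
    · have : IsEmpty (u ⁻¹' {J}) := by
        constructor; rintro ⟨I, (hI : u I = J)⟩; exact hJ ⟨I, hI⟩
      rw [tsum_empty]
      exact zero_le
  calc (∑' I : S, f I.1) = ∑' J : DI, ∑' I : u ⁻¹' {J}, f I.1.1 := key
    _ ≤ ∑' J : DI, Set.indicator (maxSet S) (fun J => bmoSq x * J.len) J :=
        ENNReal.tsum_le_tsum inner_le
    _ = ∑' J : maxSet S, bmoSq x * J.1.len := (tsum_subtype _ _).symm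
    _ = bmoSq x * ∑' J : maxSet S, J.1.len := ENNReal.tsum_mul_left
    _ = bmoSq x * covMeas S := by rw [covMeas_eq_tsum_maxSet]

end DI
namespace DI

lemma div_mul_le (a c : ℝ≥0∞) : a / c * c ≤ a := by
  rcases eq_or_ne c 0 with rfl | h0
  · simp
  rcases eq_or_ne c ⊤ with rfl | ht
  · simp [ENNReal.div_top]
  rw [ENNReal.div_mul_cancel h0 ht]

lemma indicator_iUnion_le (A : ℕ → Set DI) (g : DI → ℝ≥0∞) (K : DI) :
    Set.indicator (⋃ i, A i) g K ≤ ∑' i, Set.indicator (A i) g K := by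
  by_cases h : K ∈ ⋃ i, A i
  · rw [Set.indicator_of_mem h]
    obtain ⟨i, hi⟩ := Set.mem_iUnion.mp h
    exact le_trans (Set.indicator_of_mem hi g).symm.le (ENNReal.le_tsum i)
  · simp [Set.indicator_of_notMem h]

lemma tsum_indicator_iUnion_eq {A : ℕ → Set DI}
    (hd : Pairwise fun i j => Disjoint (A i) (A j)) (g : DI → ℝ≥0∞) (K : DI) :
    ∑' i, Set.indicator (A i) g K = Set.indicator (⋃ i, A i) g K := by
  by_cases h : K ∈ ⋃ i, A i
  · obtain ⟨i, hi⟩ := Set.mem_iUnion.mp h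
    rw [Set.indicator_of_mem h, tsum_eq_single i]
    · exact Set.indicator_of_mem hi g
    · intro j hj
      exact Set.indicator_of_notMem (fun hK => Set.disjoint_left.mp (hd hj) hK hi) g
  · rw [Set.indicator_of_notMem h]
    have : ∀ i, Set.indicator (A i) g K = 0 := fun i =>
      Set.indicator_of_notMem (fun hK => h (Set.mem_iUnion.2 ⟨i, hK⟩)) g
    simp [this]

/-- sum over a subcollection, expressed with indicators -/
lemma tsum_indicator_eq_subtype (A : Set DI) (g : DI → ℝ≥0∞) :
    ∑' K, Set.indicator A g K = ∑' K : A, g K.1 := (tsum_subtype A g).symm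

end DI
open DI

/-- If `τ` satisfies Property `P` with constant `M`, then `T h_I = h_{τ(I)}` is
bounded on dyadic BMO with `‖Tx‖² ≤ 6M² ‖x‖²`. -/
theorem stmt16 (τ : DI → DI) (hτ : Function.Injective τ) (M : ENNReal)
    (hP : ∀ J : DI,
      ∃ L E : ℕ → Set DI,
        ((⋃ i, τ '' L i) ∪ (⋃ i, E i) =
            {K : DI | K ∈ Set.range τ ∧ K.carrier ⊆ J.carrier}) ∧
        (Pairwise fun i j => Disjoint (τ '' L i) (τ '' L j)) ∧
        (Pairwise fun i j => Disjoint (E i) (E j)) ∧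
        (∀ i j, Disjoint (τ '' L i) (E j)) ∧
        CarlesonLE (⋃ i, E i) M ∧
        (∀ i, ∀ I ∈ L i,
          (τ I).len / I.len ≤ M * (covMeas (τ '' L i) + covMeas (E i)) / covMeas (L i)) ∧
        ∑' i : ℕ, covMeas (τ '' L i) ≤ M * J.len)
    (x y : DI → ℝ) (hxy : HaarCompat τ x y) :
    bmoSq y ≤ 6 * M ^ 2 * bmoSq x := by
  classical
  obtain ⟨hxy1, hxy2⟩ := hxy
  set g : DI → ℝ≥0∞ := fun K => ENNReal.ofReal ((y K) ^ 2) * K.len with hg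
  -- M ≥ 1
  have hM1 : (1 : ℝ≥0∞) ≤ M := by
    set I0 : DI := ⟨0, 0, by norm_num⟩
    set K0 := τ I0 with hK0def
    obtain ⟨L, E, hUn, hLd, hEd, hLEd, hCar, hcomp, hpack⟩ := hP K0
    have hK0 : K0 ∈ (⋃ i, τ '' L i) ∪ ⋃ i, E i := by
      rw [hUn]; exact ⟨⟨I0, rfl⟩, subset_rfl⟩
    have hlen : 1 * K0.len ≤ M * K0.len := by
      rw [one_mul]
      rcases hK0 with hK | hK
      · obtain ⟨i, hi⟩ := Set.mem_iUnion.mp hK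
        have h1 : K0.len ≤ covMeas (τ '' L i) := by
          rw [← volume_carrier, covMeas]
          exact measure_mono (Set.subset_biUnion_of_mem hi)
        exact (h1.trans (ENNReal.le_tsum i)).trans hpack
      · obtain ⟨i, hi⟩ := Set.mem_iUnion.mp hK
        have h1 : K0.len ≤ carlesonSum (⋃ i, E i) K0 :=
          ENNReal.le_tsum (⟨K0, Set.mem_iUnion.2 ⟨i, hi⟩, subset_rfl⟩ :
            {K : DI // K ∈ (⋃ i, E i) ∧ K.carrier ⊆ K0.carrier})
        exact h1.trans (hCar K0)
    exact (ENNReal.mul_le_mul_iff_left (len_ne_zero K0) (len_ne_top K0)).mp hlen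
  have main : ∀ J : DI, (∑' K : {K : DI // K.carrier ⊆ J.carrier}, g K.1)
      ≤ 3 * M ^ 2 * bmoSq x * J.len := by
    intro J
    obtain ⟨L, E, hUn, hLd, hEd, hLEd, hCar, hcomp, hpack⟩ := hP J
    set A := ⋃ i, τ '' L i with hA
    set B := ⋃ i, E i with hB
    set S := A ∪ B with hS
    have hSsub : ∀ K ∈ S, K ∈ Set.range τ ∧ K.carrier ⊆ J.carrier := fun K hK => by
      rw [hUn] at hK; exact hK
    -- Step 1
    have step1 : (∑' K : {K : DI // K.carrier ⊆ J.carrier}, g K.1)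
        = ∑' K, Set.indicator S g K := by
      have h0 : (∑' K : {K : DI // K.carrier ⊆ J.carrier}, g K.1)
          = ∑' K, Set.indicator {K : DI | K.carrier ⊆ J.carrier} g K :=
        tsum_subtype {K : DI | K.carrier ⊆ J.carrier} g
      rw [h0]
      congr 1
      funext K
      by_cases hKS : K ∈ S
      · rw [Set.indicator_of_mem hKS,
          Set.indicator_of_mem (show K ∈ {K : DI | K.carrier ⊆ J.carrier} from (hSsub K hKS).2)]
      · rw [Set.indicator_of_notMem hKS]
        by_cases hKJ : K.carrier ⊆ J.carrier
        · rw [Set.indicator_of_mem (show K ∈ {K : DI | K.carrier ⊆ J.carrier} from hKJ)]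
          have hKr : K ∉ Set.range τ := by
            intro hr
            exact hKS (by rw [hUn]; exact ⟨hr, hKJ⟩)
          simp [hg, hxy2 K hKr]
        · rw [Set.indicator_of_notMem
            (show K ∉ {K : DI | K.carrier ⊆ J.carrier} from hKJ)]
    -- Step 2
    have step2 : (∑' K, Set.indicator S g K)
        ≤ (∑' i, ∑' K, Set.indicator (τ '' L i) g K)
          + ∑' i, ∑' K, Set.indicator (E i) g K := by
      calc (∑' K, Set.indicator S g K)
          ≤ ∑' K, (Set.indicator A g K + Set.indicator B g K) := by
            apply ENNReal.tsum_le_tsum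
            intro K
            by_cases hK : K ∈ S
            · rw [Set.indicator_of_mem hK]
              rcases hK with hK | hK
              · exact le_add_right (Set.indicator_of_mem hK g).symm.le
              · exact le_add_left (Set.indicator_of_mem hK g).symm.le
            · simp [Set.indicator_of_notMem hK]
        _ = (∑' K, Set.indicator A g K) + ∑' K, Set.indicator B g K := ENNReal.tsum_add
        _ ≤ (∑' K, ∑' i, Set.indicator (τ '' L i) g K)
            + ∑' K, ∑' i, Set.indicator (E i) g K := by
            gcongr with K K
            · exact indicator_iUnion_le _ g K
            · exact indicator_iUnion_le _ g K
        _ = _ := by rw [ENNReal.tsum_comm, ENNReal.tsum_comm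
              (f := fun K i => Set.indicator (E i) g K)]
    -- bound on total length of B inside J
    have hBlen : (∑' K, Set.indicator B len K) ≤ M * J.len := by
      have heq : (∑' K, Set.indicator B len K) = carlesonSum B J := by
        rw [tsum_indicator_eq_subtype]
        have hiff : ∀ K : DI, (K ∈ B ∧ K.carrier ⊆ J.carrier) ↔ K ∈ B := fun K =>
          ⟨fun h => h.1, fun h => ⟨h, (hSsub K (Or.inr h)).2⟩⟩
        exact (Equiv.tsum_eq (Equiv.subtypeEquivRight hiff) (fun K : B => K.1.len)).symm
      rw [heq]
      exact hCar J
    -- L part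
    have hLpart : ∀ i, (∑' K, Set.indicator (τ '' L i) g K)
        ≤ bmoSq x * (M * (covMeas (τ '' L i) + covMeas (E i))) := by
      intro i
      set Ci := M * (covMeas (τ '' L i) + covMeas (E i)) / covMeas (L i) with hCi
      have e1 : (∑' K, Set.indicator (τ '' L i) g K) = ∑' I : L i, g (τ I.1) := by
        rw [tsum_indicator_eq_subtype]
        rw [← Equiv.tsum_eq (Equiv.Set.image τ (L i) hτ) (fun K => g K.1)]
        exact tsum_congr fun I => by simp
      rw [e1]
      have hterm : ∀ I : L i, g (τ I.1) ≤ Ci * (ENNReal.ofReal ((x I.1) ^ 2) * I.1.len) := by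
        intro I
        have h1 : (τ I.1).len ≤ Ci * I.1.len := by
          have h2 := hcomp i I.1 I.2
          rw [ENNReal.div_le_iff_le_mul (Or.inl (len_ne_zero _)) (Or.inl (len_ne_top _))] at h2
          exact h2
        calc g (τ I.1) = ENNReal.ofReal ((x I.1) ^ 2) * (τ I.1).len := by
              rw [hg]; simp [hxy1 I.1]
          _ ≤ ENNReal.ofReal ((x I.1) ^ 2) * (Ci * I.1.len) := by gcongr
          _ = Ci * (ENNReal.ofReal ((x I.1) ^ 2) * I.1.len) := by ring
      calc (∑' I : L i, g (τ I.1))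
          ≤ ∑' I : L i, Ci * (ENNReal.ofReal ((x I.1) ^ 2) * I.1.len) :=
            ENNReal.tsum_le_tsum hterm
        _ = Ci * ∑' I : L i, ENNReal.ofReal ((x I.1) ^ 2) * I.1.len := ENNReal.tsum_mul_left
        _ ≤ Ci * (bmoSq x * covMeas (L i)) := by
            gcongr
            exact tsum_le_bmoSq_covMeas x (L i)
        _ = bmoSq x * (Ci * covMeas (L i)) := by ring
        _ ≤ bmoSq x * (M * (covMeas (τ '' L i) + covMeas (E i))) := 
            mul_le_mul_right (div_mul_le _ _) (bmoSq x)
    -- E part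
    have hEy : ∀ i K, Set.indicator (E i) g K ≤ bmoSq x * Set.indicator (E i) len K := by
      intro i K
      by_cases hK : K ∈ E i
      · rw [Set.indicator_of_mem hK, Set.indicator_of_mem hK]
        have hKS : K ∈ S := Or.inr (Set.mem_iUnion.2 ⟨i, hK⟩)
        obtain ⟨⟨I, rfl⟩, -⟩ := hSsub _ hKS
        rw [hg]
        simp only [hxy1 I]
        exact mul_le_mul_left (sq_le_bmoSq x I) _
      · simp [Set.indicator_of_notMem hK]
    have hEpart : (∑' i, ∑' K, Set.indicator (E i) g K) ≤ bmoSq x * (M * J.len) := by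
      calc (∑' i, ∑' K, Set.indicator (E i) g K)
          ≤ ∑' i, ∑' K, bmoSq x * Set.indicator (E i) len K := by
            gcongr with i K
            exact hEy i K
        _ = bmoSq x * ∑' i, ∑' K, Set.indicator (E i) len K := by
            rw [← ENNReal.tsum_mul_left]
            congr 1
            funext i
            rw [ENNReal.tsum_mul_left]
        _ = bmoSq x * ∑' K, Set.indicator B len K := by
            congr 1
            rw [ENNReal.tsum_comm]
            exact tsum_congr fun K => tsum_indicator_iUnion_eq hEd len K
        _ ≤ bmoSq x * (M * J.len) := by gcongr
    -- E covering measure bound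
    have hEcov : (∑' i, covMeas (E i)) ≤ M * J.len := by
      calc (∑' i, covMeas (E i)) ≤ ∑' i, ∑' K, Set.indicator (E i) len K := by
            gcongr with i
            rw [tsum_indicator_eq_subtype, covMeas]
            refine le_trans (measure_biUnion_le volume (Set.to_countable _) _) ?_
            apply le_of_eq
            exact tsum_congr fun K => volume_carrier K.1
        _ = ∑' K, ∑' i, Set.indicator (E i) len K := ENNReal.tsum_comm
        _ = ∑' K, Set.indicator B len K := tsum_congr fun K => tsum_indicator_iUnion_eq hEd len K
        _ ≤ M * J.len := hBlen
    -- assemble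
    have hM2 : M ≤ M ^ 2 := by
      calc M = 1 * M := (one_mul M).symm
        _ ≤ M * M := mul_le_mul_left hM1 M
        _ = M ^ 2 := (sq M).symm
    calc (∑' K : {K : DI // K.carrier ⊆ J.carrier}, g K.1)
        = ∑' K, Set.indicator S g K := step1
      _ ≤ (∑' i, ∑' K, Set.indicator (τ '' L i) g K)
          + ∑' i, ∑' K, Set.indicator (E i) g K := step2
      _ ≤ (∑' i, bmoSq x * (M * (covMeas (τ '' L i) + covMeas (E i))))
          + bmoSq x * (M * J.len) := add_le_add (ENNReal.tsum_le_tsum hLpart) hEpart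
      _ = bmoSq x * (M * ((∑' i, covMeas (τ '' L i)) + ∑' i, covMeas (E i)))
          + bmoSq x * (M * J.len) := by
          rw [ENNReal.tsum_mul_left, ← ENNReal.tsum_add]
          congr 2
          rw [ENNReal.tsum_mul_left, ENNReal.tsum_add]
      _ ≤ bmoSq x * (M * (M * J.len + M * J.len)) + bmoSq x * (M * J.len) := by
          gcongr
      _ = (2 * M ^ 2 + M) * bmoSq x * J.len := by ring
      _ ≤ (2 * M ^ 2 + M ^ 2) * bmoSq x * J.len := by gcongr
      _ = 3 * M ^ 2 * bmoSq x * J.len := by ring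
  rw [bmoSq]
  apply iSup_le
  intro J
  rw [ENNReal.div_le_iff_le_mul (Or.inl (len_ne_zero J)) (Or.inl (len_ne_top J))]
  calc (∑' K : {K : DI // K.carrier ⊆ J.carrier}, ENNReal.ofReal ((y K.1) ^ 2) * K.1.len)
      ≤ 3 * M ^ 2 * bmoSq x * J.len := main J
    _ ≤ 6 * M ^ 2 * bmoSq x * J.len := by
        gcongr
        norm_num
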